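/- Let L be a complete enriched Lie algebra. For each n and α, the surjection L → L_α/(L_α)^n factors through L/L^n, and the resulting maps exhibit the identity of L as a composite L → lim_n L/L^n → L. Hence L is a retract of its classical pronilpotent completion lim_n L/L^n. -/

import Mathlib

section EnrichedPre

variable {L : Type*} [LieRing L] [LieAlgebra ℚ L]

/-- `lcsIn A n` is the span of iterated Lie brackets of length `n+1` with entries in `A`
(so `lcsIn ⊤ (k-1)` is the `k`-th term `L^k` of the lower central series). -/
def lcsIn (A : Submodule ℚ L) : ℕ → Submodule ℚ L
  | 0 => A
  | n + 1 => Submodule.span ℚ {z : L | ∃ x ∈ A, ∃ y ∈ lcsIn A n, ⁅x, y⁆ = z}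

/-- The closure of a subspace `S` in an enriched Lie algebra `(L, {I α})`:
the set of limits of coherent families of elements of `S`, i.e. of those `x`
whose image in each `L ⧸ I α` lies in the image of `S`. -/
def encl {ι : Type*} (I : ι → LieIdeal ℚ L) (S : Submodule ℚ L) : Submodule ℚ L where
  carrier := {x : L | ∀ α, ∃ s ∈ S, x - s ∈ (I α : Submodule ℚ L)}
  add_mem' := by
    intro a b ha hb α
    obtain ⟨s, hs, h1⟩ := ha α
    obtain ⟨t, ht, h2⟩ := hb α
    exact ⟨s + t, S.add_mem hs ht, by
      simpa [add_sub_add_comm] using Submodule.add_mem _ h1 h2⟩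
  zero_mem' := fun α => ⟨0, S.zero_mem, by simp⟩
  smul_mem' := by
    intro c a ha α
    obtain ⟨s, hs, h1⟩ := ha α
    exact ⟨c • s, S.smul_mem c hs, by
      simpa [smul_sub] using Submodule.smul_mem _ c h1⟩

/-- `(L, {I α})` is an enriched Lie algebra: a directed family of ideals with
finite-dimensional nilpotent quotients and trivial intersection. -/
def IsEnriched {ι : Type*} (I : ι → LieIdeal ℚ L) : Prop :=
  (∀ α β, ∃ γ, I γ ≤ I α ⊓ I β) ∧
  (∀ α, FiniteDimensional ℚ (L ⧸ I α)) ∧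
  (∀ α, LieRing.IsNilpotent (L ⧸ I α)) ∧
  (⨅ α, I α) = ⊥

/-- Completeness of `(L, {I α})`: every coherent family in `lim_α L/I α`
(presented by compatible representatives) has a limit in `L`. -/
def IsCompleteWrt {ι : Type*} (I : ι → LieIdeal ℚ L) : Prop :=
  ∀ y : ι → L, (∀ α β, I β ≤ I α → y β - y α ∈ (I α : Submodule ℚ L)) →
    ∃ x : L, ∀ α, x - y α ∈ (I α : Submodule ℚ L)

end EnrichedPre

section LimPre

variable {M : Type*} [AddCommGroup M] [Module ℚ M]

/-- The inverse limit `lim_a M ⧸ J a`, realized as the submodule of coherent families in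
the product of the quotients (the transition maps being the canonical projections). -/
def limOf {κ : Type*} (J : κ → Submodule ℚ M) : Submodule ℚ (∀ a, M ⧸ J a) where
  carrier := {x | ∀ a b (h : J b ≤ J a),
    Submodule.mapQ (J b) (J a) LinearMap.id
      (by simpa [Submodule.comap_id] using h) (x b) = x a}
  add_mem' := by
    intro u v hu hv a b h
    simp only [Pi.add_apply, map_add, hu a b h, hv a b h]
  zero_mem' := by
    intro a b h
    simp
  smul_mem' := by
    intro c u hu a b h
    simp only [Pi.smul_apply, map_smul, hu a b h]

/-- The canonical map `M → lim_a M ⧸ J a`. -/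
def limProj {κ : Type*} (J : κ → Submodule ℚ M) : M →ₗ[ℚ] ↥(limOf J) :=
  LinearMap.codRestrict (limOf J) (LinearMap.pi fun a => (J a).mkQ)
    (by
      intro x a b h
      simp [Submodule.mapQ_apply])

end LimPre


section Aux

variable {L : Type*} [LieRing L] [LieAlgebra ℚ L]

lemma lcsIn_top_succ_le (n : ℕ) :
    lcsIn (⊤ : Submodule ℚ L) (n + 1) ≤ lcsIn (⊤ : Submodule ℚ L) n := by
  cases n with
  | zero => exact le_top
  | succ n =>
    refine Submodule.span_le.2 ?_
    rintro z ⟨x, hx, y, hy, rfl⟩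
    exact Submodule.subset_span ⟨x, hx, y, lcsIn_top_succ_le n hy, rfl⟩

lemma lcsIn_top_anti {m n : ℕ} (h : n ≤ m) :
    lcsIn (⊤ : Submodule ℚ L) m ≤ lcsIn (⊤ : Submodule ℚ L) n :=
  antitone_nat_of_succ_le lcsIn_top_succ_le h

lemma lcsIn_top_le_lcs (I : LieIdeal ℚ L) (n : ℕ) :
    ∀ x ∈ lcsIn (⊤ : Submodule ℚ L) n,
      (LieSubmodule.Quotient.mk' I) x ∈ LieModule.lowerCentralSeries ℚ (L ⧸ I) (L ⧸ I) n := by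
  induction n with
  | zero => intro x _; simp
  | succ n ih =>
    intro x hx
    have hle : lcsIn (⊤ : Submodule ℚ L) (n + 1) ≤
        Submodule.comap ((LieSubmodule.Quotient.mk' I : L →ₗ⁅ℚ,L⁆ L ⧸ I) : L →ₗ[ℚ] L ⧸ I)
          ((LieModule.lowerCentralSeries ℚ (L ⧸ I) (L ⧸ I) (n + 1) : LieIdeal ℚ (L ⧸ I)) :
            Submodule ℚ (L ⧸ I)) := by
      refine Submodule.span_le.2 ?_
      rintro z ⟨a, _, b, hb, rfl⟩
      have : (LieSubmodule.Quotient.mk' I) ⁅a, b⁆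
          = ⁅(LieSubmodule.Quotient.mk' I) a, (LieSubmodule.Quotient.mk' I) b⁆ := rfl
      have hm : (LieSubmodule.Quotient.mk' I) ⁅a, b⁆ ∈
          LieModule.lowerCentralSeries ℚ (L ⧸ I) (L ⧸ I) (n + 1) := by
        rw [this, LieModule.lowerCentralSeries_succ]
        exact LieSubmodule.lie_mem_lie (LieSubmodule.mem_top _) (ih b hb)
      exact hm
    exact hle hx

lemma exists_lcsIn_le (I : LieIdeal ℚ L) (hN : LieRing.IsNilpotent (L ⧸ I)) :
    ∃ n, lcsIn (⊤ : Submodule ℚ L) n ≤ (I : Submodule ℚ L) := by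
  obtain ⟨k, hk⟩ := (LieModule.isNilpotent_iff ℚ (L ⧸ I) (L ⧸ I)).mp hN
  refine ⟨k, fun x hx => ?_⟩
  have := lcsIn_top_le_lcs I k x hx
  rw [hk, LieSubmodule.mem_bot] at this
  exact (LieSubmodule.Quotient.mk_eq_zero' (N := I)).mp this

/-- The characterizing property of the value of the retraction `ψ` at a coherent family `u`. -/
def Key {ι : Type*} (I : ι → LieIdeal ℚ L)
    (u : ∀ n : ℕ, L ⧸ lcsIn (⊤ : Submodule ℚ L) n) (x : L) : Prop :=
  ∀ α n, lcsIn (⊤ : Submodule ℚ L) n ≤ (I α : Submodule ℚ L) →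
    ∀ z : L, (Submodule.Quotient.mk z : L ⧸ lcsIn (⊤ : Submodule ℚ L) n) = u n →
      x - z ∈ (I α : Submodule ℚ L)

lemma key_unique {ι : Type*} {I : ι → LieIdeal ℚ L} (hE : IsEnriched I)
    {u : ∀ n : ℕ, L ⧸ lcsIn (⊤ : Submodule ℚ L) n} {x x' : L}
    (hx : Key I u x) (hx' : Key I u x') : x = x' := by
  have hmem : ∀ α, x - x' ∈ (I α : Submodule ℚ L) := by
    intro α
    obtain ⟨n, hn⟩ := exists_lcsIn_le (I α) (hE.2.2.1 α)
    obtain ⟨z, hz⟩ := Submodule.Quotient.mk_surjective _ (u n)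
    have h1 := hx α n hn z hz
    have h2 := hx' α n hn z hz
    have : x - x' = (x - z) - (x' - z) := by abel
    rw [this]; exact Submodule.sub_mem _ h1 h2
  have : x - x' ∈ (⨅ α, I α : LieIdeal ℚ L) := (LieSubmodule.mem_iInf _).2 hmem
  rw [hE.2.2.2, LieSubmodule.mem_bot, sub_eq_zero] at this
  exact this

lemma coherent_lift {u : ↥(limOf fun n : ℕ => lcsIn (⊤ : Submodule ℚ L) n)}
    {m n : ℕ} (h : n ≤ m) {z w : L}
    (hz : (Submodule.Quotient.mk z : L ⧸ lcsIn (⊤ : Submodule ℚ L) m) = u.1 m)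
    (hw : (Submodule.Quotient.mk w : L ⧸ lcsIn (⊤ : Submodule ℚ L) n) = u.1 n) :
    z - w ∈ lcsIn (⊤ : Submodule ℚ L) n := by
  have hle := lcsIn_top_anti (L := L) h
  have hc := u.2 n m hle
  rw [← hz, Submodule.mapQ_apply, LinearMap.id_apply] at hc
  rw [← hw] at hc
  rwa [Submodule.Quotient.eq] at hc

lemma key_exists {ι : Type*} {I : ι → LieIdeal ℚ L} (hE : IsEnriched I)
    (hC : IsCompleteWrt I) (u : ↥(limOf fun n : ℕ => lcsIn (⊤ : Submodule ℚ L) n)) :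
    ∃ x : L, Key I u.1 x := by
  choose n hn using fun α => exists_lcsIn_le (I α) (hE.2.2.1 α)
  choose y hy using fun α => Submodule.Quotient.mk_surjective _ (u.1 (n α))
  have hcoh : ∀ α β, I β ≤ I α → y β - y α ∈ (I α : Submodule ℚ L) := by
    intro α β hba
    obtain ⟨w, hw⟩ := Submodule.Quotient.mk_surjective _ (u.1 (max (n α) (n β)))
    have h1 : w - y α ∈ lcsIn (⊤ : Submodule ℚ L) (n α) :=
      coherent_lift (le_max_left _ _) hw (hy α)
    have h2 : w - y β ∈ lcsIn (⊤ : Submodule ℚ L) (n β) :=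
      coherent_lift (le_max_right _ _) hw (hy β)
    have : y β - y α = (w - y α) - (w - y β) := by abel
    rw [this]
    exact Submodule.sub_mem _ (hn α h1) (hba (hn β h2))
  obtain ⟨x, hx⟩ := hC y hcoh
  refine ⟨x, fun α k hk z hz => ?_⟩
  obtain ⟨w, hw⟩ := Submodule.Quotient.mk_surjective _ (u.1 (max k (n α)))
  have h1 : w - z ∈ lcsIn (⊤ : Submodule ℚ L) k :=
    coherent_lift (le_max_left _ _) hw hz
  have h2 : w - y α ∈ lcsIn (⊤ : Submodule ℚ L) (n α) :=
    coherent_lift (le_max_right _ _) hw (hy α)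
  have : x - z = (x - y α) - (w - y α) + (w - z) := by abel
  rw [this]
  exact Submodule.add_mem _ (Submodule.sub_mem _ (hx α) (hn α h2)) (hk h1)

end Aux

/-- A complete enriched Lie algebra `L` is a retract of its classical
pronilpotent completion `lim_n L/L^n`: the canonical map `φ : L → lim_n L/L^n` admits a
left inverse `ψ` with `ψ ∘ φ = id`.  (Here `lcsIn ⊤ (n-1)` is `L^n`.) -/
theorem stmt9 {ι L : Type*} [LieRing L] [LieAlgebra ℚ L]
    (I : ι → LieIdeal ℚ L) (hE : IsEnriched I) (hC : IsCompleteWrt I) :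
    ∃ ψ : ↥(limOf fun n : ℕ => lcsIn (⊤ : Submodule ℚ L) n) →ₗ[ℚ] L,
      ∀ x : L, ψ (limProj (fun n : ℕ => lcsIn (⊤ : Submodule ℚ L) n) x) = x := by
  classical
  have hex := key_exists hE hC
  choose f hf using hex
  have hadd : ∀ u v, f (u + v) = f u + f v := by
    intro u v
    refine key_unique hE (hf (u + v)) ?_
    intro α k hk z hz
    obtain ⟨z1, hz1⟩ := Submodule.Quotient.mk_surjective _ (u.1 k)
    have hz2 : (Submodule.Quotient.mk (z - z1) : L ⧸ lcsIn (⊤ : Submodule ℚ L) k) = v.1 k := by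
      have : ((u + v : ↥(limOf fun n : ℕ => lcsIn (⊤ : Submodule ℚ L) n)).1 k)
          = u.1 k + v.1 k := rfl
      rw [Submodule.Quotient.mk_sub, hz1, hz]
      rw [this]; abel
    have h1 := hf u α k hk z1 hz1
    have h2 := hf v α k hk (z - z1) hz2
    have : f u + f v - z = (f u - z1) + (f v - (z - z1)) := by abel
    rw [this]
    exact Submodule.add_mem _ h1 h2
  have hsmul : ∀ (c : ℚ) u, f (c • u) = c • f u := by
    intro c u
    refine key_unique hE (hf (c • u)) ?_
    intro α k hk z hz
    obtain ⟨z1, hz1⟩ := Submodule.Quotient.mk_surjective _ (u.1 k)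
    have hz2 : (Submodule.Quotient.mk (z - c • z1) : L ⧸ lcsIn (⊤ : Submodule ℚ L) k) = 0 := by
      have : ((c • u : ↥(limOf fun n : ℕ => lcsIn (⊤ : Submodule ℚ L) n)).1 k)
          = c • u.1 k := rfl
      rw [Submodule.Quotient.mk_sub, hz, Submodule.Quotient.mk_smul, hz1, this, sub_self]
    rw [Submodule.Quotient.mk_eq_zero] at hz2
    have h1 := hf u α k hk z1 hz1
    have : c • f u - z = c • (f u - z1) - (z - c • z1) := by
      rw [smul_sub]; abel
    rw [this]
    exact Submodule.sub_mem _ (Submodule.smul_mem _ c h1) (hk hz2)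
  refine ⟨{ toFun := f, map_add' := hadd, map_smul' := hsmul }, fun x => ?_⟩
  have hx : Key I (limProj (fun n : ℕ => lcsIn (⊤ : Submodule ℚ L) n) x).1 x := by
    intro α k hk z hz
    have : (limProj (fun n : ℕ => lcsIn (⊤ : Submodule ℚ L) n) x).1 k
        = Submodule.Quotient.mk x := rfl
    rw [this] at hz
    have : x - z ∈ lcsIn (⊤ : Submodule ℚ L) k := by
      rw [← Submodule.Quotient.eq, hz]
    exact hk this
  exact key_unique hE (hf _) hx
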